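/- For every fixed b ≥ 0, the function a ↦ ψ(a,b) = −a·k·(q + q·μ_α·θ(b)) + c·γ(b) + λk·(e^{−μ_α a} − 1)/μ_α is strictly decreasing on [0,∞), satisfies ψ(0,b) = c·γ(b) > 0 and ψ(a,b) → −∞ as a → ∞; consequently there exists a unique a* ∈ (0,∞) with ψ(a*,b) = 0, and a* is the unique critical point of a ↦ J(a,b) on (0,∞). -/

import Mathlib

set_option maxHeartbeats 1600000 in
theorem stmt10 (c α lam q μ k : ℝ)
    (hc : 0 < c) (hα0 : 0 < α) (hα1 : α ≤ 1)
    (hlam : 0 < lam) (hq : 0 < q) (hμ : 0 < μ) (hk : 1 ≤ k)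
    (Δ Φ ρ : ℝ)
    (hΔ : Δ = (c*μ - α*lam - α*q)^2 + 4*α*c*μ*q)
    (hΦ : Φ = (-(c*μ - α*lam - α*q) + Real.sqrt Δ) / (2*α*c))
    (hρ : ρ = (-(c*μ - α*lam - α*q) - Real.sqrt Δ) / (2*α*c))
    (hΦpos : 0 < Φ) (hρneg : ρ < 0)
    (γ θf m : ℝ → ℝ) (D J ψ : ℝ → ℝ → ℝ)
    (hγ : ∀ b, γ b = (Φ - ρ)/(Φ*Real.exp (Φ*b) - ρ*Real.exp (ρ*b)))
    (hθf : ∀ b, θf b = (Real.exp (Φ*b) - Real.exp (ρ*b))/(Φ*Real.exp (Φ*b) - ρ*Real.exp (ρ*b)))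
    (hm : ∀ a, m a = (1 - Real.exp (-(μ/α)*a)*((μ/α)*a + 1))/(μ/α))
    (hD : ∀ a b, D a b = q + (μ/α)*q*θf b + lam*Real.exp (-(μ/α)*a))
    (hJ : ∀ a b, J a b = (c*γ b - lam*k*m a)/(D a b))
    (hψ : ∀ a b, ψ a b = -(a*k*(q + q*(μ/α)*θf b)) + c*γ b + lam*k*(Real.exp (-(μ/α)*a) - 1)/(μ/α)) :
    ∀ b : ℝ, 0 ≤ b →
      StrictAntiOn (fun a => ψ a b) (Set.Ici 0) ∧
      ψ 0 b = c * γ b ∧ 0 < c * γ b ∧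
      Filter.Tendsto (fun a => ψ a b) Filter.atTop Filter.atBot ∧
      ∃ astar : ℝ, 0 < astar ∧ ψ astar b = 0 ∧
        (∀ a, 0 < a → ψ a b = 0 → a = astar) ∧
        (∀ a, 0 < a → (deriv (fun a' => J a' b) a = 0 ↔ a = astar)) := by
  intro b hb
  have hμα : 0 < μ/α := div_pos hμ hα0
  have hden : 0 < Φ*Real.exp (Φ*b) - ρ*Real.exp (ρ*b) := by
    have h1 : 0 < Φ*Real.exp (Φ*b) := mul_pos hΦpos (Real.exp_pos _)
    have h2 : ρ*Real.exp (ρ*b) < 0 := mul_neg_of_neg_of_pos hρneg (Real.exp_pos _)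
    linarith
  have hθ0 : 0 ≤ θf b := by
    rw [hθf]
    apply div_nonneg _ hden.le
    have : Real.exp (ρ*b) ≤ Real.exp (Φ*b) := Real.exp_le_exp.mpr (by nlinarith)
    linarith
  have hγpos : 0 < γ b := by
    rw [hγ]; exact div_pos (by linarith) hden
  have hGpos : 0 < c * γ b := mul_pos hc hγpos
  have hkpos : 0 < k := lt_of_lt_of_le one_pos hk
  have hKpos : 0 < q + q*(μ/α)*θf b := by
    have h1 : 0 ≤ q*(μ/α)*θf b := by positivity
    linarith
  -- strict antitonicity
  have hanti : StrictAntiOn (fun a => ψ a b) (Set.Ici 0) := by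
    intro x hx y hy hxy
    simp only [hψ]
    have h1 : x*k*(q + q*(μ/α)*θf b) < y*k*(q + q*(μ/α)*θf b) :=
      mul_lt_mul_of_pos_right (mul_lt_mul_of_pos_right hxy hkpos) hKpos
    have h2 : Real.exp (-(μ/α)*y) < Real.exp (-(μ/α)*x) := by
      apply Real.exp_lt_exp.mpr; nlinarith
    have h3 : lam*k*(Real.exp (-(μ/α)*y) - 1)/(μ/α) < lam*k*(Real.exp (-(μ/α)*x) - 1)/(μ/α) := by
      apply (div_lt_div_iff_of_pos_right hμα).mpr
      nlinarith [mul_lt_mul_of_pos_left h2 (mul_pos hlam hkpos)]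
    linarith
  -- value at 0
  have hψ0 : ψ 0 b = c * γ b := by
    rw [hψ]; simp
  -- tendsto atBot
  have htend : Filter.Tendsto (fun a => ψ a b) Filter.atTop Filter.atBot := by
    have hg : Filter.Tendsto (fun a : ℝ => c*γ b + -(a*(k*(q + q*(μ/α)*θf b))))
        Filter.atTop Filter.atBot := by
      apply Filter.tendsto_atBot_add_const_left
      exact Filter.tendsto_neg_atTop_atBot.comp
        (Filter.tendsto_id.atTop_mul_const (mul_pos hkpos hKpos))
    apply Filter.tendsto_atBot_mono' _ _ hg
    filter_upwards [Filter.eventually_ge_atTop (0:ℝ)] with a ha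
    rw [hψ]
    have h1 : Real.exp (-(μ/α)*a) ≤ 1 := by
      rw [← Real.exp_zero]; apply Real.exp_le_exp.mpr; nlinarith
    have h2 : lam*k*(Real.exp (-(μ/α)*a) - 1)/(μ/α) ≤ 0 := by
      apply div_nonpos_of_nonpos_of_nonneg _ hμα.le
      have : 0 < lam*k := mul_pos hlam hkpos
      nlinarith
    nlinarith
  -- continuity
  have hcont : Continuous (fun a => ψ a b) := by
    simp only [hψ]; fun_prop
  -- existence of root
  obtain ⟨a1, ha1neg, ha1pos⟩ : ∃ a1, ψ a1 b < 0 ∧ 0 < a1 :=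
    ((htend.eventually (Filter.eventually_lt_atBot 0)).and
      (Filter.eventually_gt_atTop 0)).exists
  obtain ⟨astar, hastar_mem, hastar_eq⟩ :=
    intermediate_value_Ioo' ha1pos.le hcont.continuousOn
      (show (0:ℝ) ∈ Set.Ioo (ψ a1 b) (ψ 0 b) by rw [hψ0]; exact ⟨ha1neg, hGpos⟩)
  obtain ⟨hastar0, _⟩ := hastar_mem
  have hastar_eq : ψ astar b = 0 := hastar_eq
  have huniq : ∀ a, 0 < a → ψ a b = 0 → a = astar := by
    intro a ha h0
    by_contra hne
    rcases lt_or_gt_of_ne hne with h | h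
    · have := hanti (Set.mem_Ici.mpr ha.le) (Set.mem_Ici.mpr hastar0.le) h
      simp only at this; rw [h0, hastar_eq] at this; exact lt_irrefl 0 this
    · have := hanti (Set.mem_Ici.mpr hastar0.le) (Set.mem_Ici.mpr ha.le) h
      simp only at this; rw [h0, hastar_eq] at this; exact lt_irrefl 0 this
  refine ⟨hanti, hψ0, hGpos, htend, astar, hastar0, hastar_eq, huniq, ?_⟩
  -- derivative of J
  have Dpos : ∀ a : ℝ, 0 < q + (μ/α)*q*θf b + lam*Real.exp (-(μ/α)*a) := by
    intro a
    have h1 : 0 ≤ (μ/α)*q*θf b := by positivity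
    have h2 : 0 < lam*Real.exp (-(μ/α)*a) := mul_pos hlam (Real.exp_pos _)
    linarith
  have hkey : ∀ a : ℝ, deriv (fun a' => J a' b) a
      = lam*(μ/α)*Real.exp (-(μ/α)*a) * ψ a b
        / (q + (μ/α)*q*θf b + lam*Real.exp (-(μ/α)*a))^2 := by
    intro a
    have hFeq : (fun a' => J a' b)
        = fun a' => (c*γ b - lam*k*((1 - Real.exp (-(μ/α)*a')*((μ/α)*a'+1))/(μ/α)))
            / (q + (μ/α)*q*θf b + lam*Real.exp (-(μ/α)*a')) := by
      funext a'
      rw [hJ, hm, hD]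
    have hEa : HasDerivAt (fun a' : ℝ => Real.exp (-(μ/α)*a'))
        (Real.exp (-(μ/α)*a) * (-(μ/α))) a := by
      have h2 : HasDerivAt (fun a' : ℝ => -(μ/α)*a') (-(μ/α)) a := by
        simpa using (hasDerivAt_id a).const_mul (-(μ/α))
      exact h2.exp
    have hlin : HasDerivAt (fun a' : ℝ => (μ/α)*a'+1) (μ/α) a := by
      simpa using ((hasDerivAt_id a).const_mul (μ/α)).add_const 1
    have hu : HasDerivAt (fun a' : ℝ => Real.exp (-(μ/α)*a') * ((μ/α)*a'+1)) _ a := hEa.mul hlin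
    have hNum := (((hu.const_sub 1).div_const (μ/α)).const_mul (lam*k)).const_sub (c*γ b)
    have hDen := ((hEa.const_mul lam).const_add (q + (μ/α)*q*θf b))
    have hJd : HasDerivAt (fun a' => (c*γ b - lam*k*((1 - Real.exp (-(μ/α)*a')*((μ/α)*a'+1))/(μ/α)))
              / (q + (μ/α)*q*θf b + lam*Real.exp (-(μ/α)*a'))) _ a := hNum.div hDen (Dpos a).ne'
    rw [hFeq, hJd.deriv, hψ]
    beta_reduce
    rw [div_eq_div_iff (pow_ne_zero 2 (Dpos a).ne') (pow_ne_zero 2 (Dpos a).ne')]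
    field_simp
    ring
  intro a ha
  constructor
  · intro h0
    rw [hkey a] at h0
    have hnum : lam*(μ/α)*Real.exp (-(μ/α)*a) * ψ a b = 0 := by
      rcases div_eq_zero_iff.mp h0 with h | h
      · exact h
      · exact absurd h (pow_ne_zero 2 (Dpos a).ne')
    have hpos : (0:ℝ) < lam*(μ/α)*Real.exp (-(μ/α)*a) := by positivity
    exact huniq a ha ((mul_eq_zero.mp hnum).resolve_left hpos.ne')
  · intro h0
    subst h0
    rw [hkey a, hastar_eq]
    simp
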